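/- In the Hopf algebra of (undecorated) rooted trees H_rt with grafting operator B_+, the elements defined by c_0 = 1 and c_n = B_+( Σ_{k_1+k_2 = n−1, k_i ≥ 0} c_{k_1} c_{k_2} ) (i.e. the solution of the Dyson–Schwinger equation X = 1 + λ B_+(X²)) generate a Hopf subalgebra: Δ(c_n) = Σ_{k=0}^{n} P_k^n ⊗ c_{n−k}, where P_k^n = Σ_{l_1+⋯+l_{k+1} = n−k} c_{l_1} ⋯ c_{l_{k+1}}. -/

import Mathlib

open TensorProduct

section Aux

variable {M : Type*} [AddCommMonoid M]

/-- Associativity of iterated antidiagonal sums. -/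
private lemma adA (m : ℕ) (f : ℕ → ℕ → ℕ → M) :
    ∑ x ∈ Finset.HasAntidiagonal.antidiagonal m, ∑ y ∈ Finset.HasAntidiagonal.antidiagonal x.1, f y.1 y.2 x.2
      = ∑ x ∈ Finset.HasAntidiagonal.antidiagonal m, ∑ y ∈ Finset.HasAntidiagonal.antidiagonal x.2, f x.1 y.1 y.2 := by
  rw [Finset.sum_sigma', Finset.sum_sigma']
  refine Finset.sum_nbij' (fun a => ⟨(a.2.1, a.2.2 + a.1.2), (a.2.2, a.1.2)⟩)
    (fun a => ⟨(a.1.1 + a.2.1, a.2.2), (a.1.1, a.2.1)⟩) ?_ ?_ ?_ ?_ ?_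
  · rintro ⟨⟨i, j⟩, ⟨p, q⟩⟩ h
    simp only [Finset.mem_sigma, Finset.HasAntidiagonal.mem_antidiagonal, and_true] at h ⊢
    omega
  · rintro ⟨⟨i, j⟩, ⟨p, q⟩⟩ h
    simp only [Finset.mem_sigma, Finset.HasAntidiagonal.mem_antidiagonal, and_true] at h ⊢
    omega
  · rintro ⟨⟨i, j⟩, ⟨p, q⟩⟩ h
    simp only [Finset.mem_sigma, Finset.HasAntidiagonal.mem_antidiagonal] at h
    obtain ⟨h1, h2⟩ := h
    subst h2
    rfl
  · rintro ⟨⟨i, j⟩, ⟨p, q⟩⟩ h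
    simp only [Finset.mem_sigma, Finset.HasAntidiagonal.mem_antidiagonal] at h
    obtain ⟨h1, h2⟩ := h
    subst h2
    rfl
  · rintro ⟨⟨i, j⟩, ⟨p, q⟩⟩ _
    rfl

/-- Four-fold rearrangement of antidiagonal sums. -/
private lemma adA4 (m : ℕ) (f : ℕ → ℕ → ℕ → ℕ → M) :
    ∑ x ∈ Finset.HasAntidiagonal.antidiagonal m, ∑ y ∈ Finset.HasAntidiagonal.antidiagonal x.1,
        ∑ z ∈ Finset.HasAntidiagonal.antidiagonal x.2, f y.1 y.2 z.1 z.2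
      = ∑ x ∈ Finset.HasAntidiagonal.antidiagonal m, ∑ y ∈ Finset.HasAntidiagonal.antidiagonal x.1,
        ∑ z ∈ Finset.HasAntidiagonal.antidiagonal x.2, f y.1 z.1 y.2 z.2 :=
  calc
    ∑ x ∈ Finset.HasAntidiagonal.antidiagonal m, ∑ y ∈ Finset.HasAntidiagonal.antidiagonal x.1,
        ∑ z ∈ Finset.HasAntidiagonal.antidiagonal x.2, f y.1 y.2 z.1 z.2
      = ∑ x ∈ Finset.HasAntidiagonal.antidiagonal m, ∑ y ∈ Finset.HasAntidiagonal.antidiagonal x.2,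
        ∑ z ∈ Finset.HasAntidiagonal.antidiagonal y.2, f x.1 y.1 z.1 z.2 :=
        adA m (fun a p j => ∑ z ∈ Finset.HasAntidiagonal.antidiagonal j, f a p z.1 z.2)
    _ = ∑ x ∈ Finset.HasAntidiagonal.antidiagonal m, ∑ y ∈ Finset.HasAntidiagonal.antidiagonal x.2,
        ∑ z ∈ Finset.HasAntidiagonal.antidiagonal y.1, f x.1 z.1 z.2 y.2 :=
        Finset.sum_congr rfl fun x _ => (adA x.2 (fun p b q => f x.1 p b q)).symm
    _ = ∑ x ∈ Finset.HasAntidiagonal.antidiagonal m, ∑ y ∈ Finset.HasAntidiagonal.antidiagonal x.2,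
        ∑ z ∈ Finset.HasAntidiagonal.antidiagonal y.1, f x.1 z.2 z.1 y.2 :=
        Finset.sum_congr rfl fun x _ => Finset.sum_congr rfl fun y _ =>
          (Finset.Nat.sum_antidiagonal_swap (f := fun p => f x.1 p.2 p.1 y.2))
    _ = ∑ x ∈ Finset.HasAntidiagonal.antidiagonal m, ∑ y ∈ Finset.HasAntidiagonal.antidiagonal x.2,
        ∑ z ∈ Finset.HasAntidiagonal.antidiagonal y.2, f x.1 z.1 y.1 z.2 :=
        Finset.sum_congr rfl fun x _ => adA x.2 (fun b p q => f x.1 p b q)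
    _ = ∑ x ∈ Finset.HasAntidiagonal.antidiagonal m, ∑ y ∈ Finset.HasAntidiagonal.antidiagonal x.1,
        ∑ z ∈ Finset.HasAntidiagonal.antidiagonal x.2, f y.1 z.1 y.2 z.2 :=
        (adA m (fun a b r => ∑ z ∈ Finset.HasAntidiagonal.antidiagonal r, f a z.1 b z.2)).symm

variable {R : Type*} [CommSemiring R]

/-- Abbreviation for the homogeneous sums appearing in the theorem. -/
private def SS (c : ℕ → R) (k n : ℕ) : R :=
  ∑ l ∈ Finset.Nat.antidiagonalTuple k n, ∏ i, c (l i)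

private lemma SS_one (c : ℕ → R) (n : ℕ) : SS c 1 n = c n := by
  simp [SS]

private lemma SS_succ (c : ℕ → R) (k n : ℕ) :
    SS c (k + 1) n = ∑ p ∈ Finset.HasAntidiagonal.antidiagonal n, c p.1 * SS c k p.2 := by
  simp only [SS, Finset.mul_sum]
  rw [Finset.sum_sigma']
  refine Finset.sum_nbij' (fun l => ⟨(l 0, ∑ i, Fin.tail l i), Fin.tail l⟩)
    (fun a => Fin.cons a.1.1 a.2) ?_ ?_ ?_ ?_ ?_
  · intro l hl
    have hs := Finset.Nat.mem_antidiagonalTuple.mp hl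
    rw [Finset.mem_sigma]
    refine ⟨Finset.HasAntidiagonal.mem_antidiagonal.mpr ?_, Finset.Nat.mem_antidiagonalTuple.mpr rfl⟩
    rw [← hs, Fin.sum_univ_succ]
    rfl
  · rintro ⟨⟨p1, p2⟩, t⟩ ha
    simp only [Finset.mem_sigma, Finset.HasAntidiagonal.mem_antidiagonal,
      Finset.Nat.mem_antidiagonalTuple] at ha
    show Fin.cons p1 t ∈ Finset.Nat.antidiagonalTuple (k + 1) n
    rw [Finset.Nat.mem_antidiagonalTuple, Fin.sum_univ_succ]
    simp only [Fin.cons_zero, Fin.cons_succ]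
    rw [ha.2]
    exact ha.1
  · intro l _
    exact Fin.cons_self_tail l
  · rintro ⟨⟨p1, p2⟩, t⟩ ha
    simp only [Finset.mem_sigma, Finset.HasAntidiagonal.mem_antidiagonal,
      Finset.Nat.mem_antidiagonalTuple] at ha
    simp [Fin.tail_cons, Fin.cons_zero, ha.2]
  · intro l _
    rw [Fin.prod_univ_succ]
    rfl

private lemma SS_conv (c : ℕ → R) :
    ∀ a b n : ℕ, ∑ p ∈ Finset.HasAntidiagonal.antidiagonal n, SS c a p.1 * SS c b p.2 = SS c (a + b) n := by
  intro a
  induction a with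
  | zero =>
    intro b n
    rw [Nat.zero_add]
    have h1 : ∀ p ∈ Finset.HasAntidiagonal.antidiagonal n, p ≠ (0, n) → SS c 0 p.1 * SS c b p.2 = 0 := by
      rintro ⟨p1, p2⟩ hp hne
      have hmem := Finset.HasAntidiagonal.mem_antidiagonal.mp hp
      obtain ⟨s, rfl⟩ : ∃ s, p1 = s + 1 := by
        rcases p1 with _ | s
        · exact absurd (by simp at hmem ⊢; omega) hne
        · exact ⟨s, rfl⟩
      simp [SS]
    rw [Finset.sum_eq_single (0, n) h1
      (fun h => absurd (Finset.HasAntidiagonal.mem_antidiagonal.mpr (by simp)) h)]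
    simp [SS]
  | succ a ih =>
    intro b n
    calc
      ∑ p ∈ Finset.HasAntidiagonal.antidiagonal n, SS c (a + 1) p.1 * SS c b p.2
        = ∑ p ∈ Finset.HasAntidiagonal.antidiagonal n, ∑ y ∈ Finset.HasAntidiagonal.antidiagonal p.1,
            c y.1 * (SS c a y.2 * SS c b p.2) := by
          refine Finset.sum_congr rfl fun p _ => ?_
          rw [SS_succ, Finset.sum_mul]
          exact Finset.sum_congr rfl fun y _ => by ring
      _ = ∑ p ∈ Finset.HasAntidiagonal.antidiagonal n, ∑ y ∈ Finset.HasAntidiagonal.antidiagonal p.2,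
            c p.1 * (SS c a y.1 * SS c b y.2) :=
          adA n (fun u v j => c u * (SS c a v * SS c b j))
      _ = ∑ p ∈ Finset.HasAntidiagonal.antidiagonal n, c p.1 * SS c (a + b) p.2 := by
          refine Finset.sum_congr rfl fun p _ => ?_
          rw [← Finset.mul_sum, ih b p.2]
      _ = SS c (a + 1 + b) n := by
          rw [show a + 1 + b = a + b + 1 by omega, SS_succ]

end Aux

/-- The solution `c₀ = 1`, `cₙ = B₊(Σ_{i+j=n−1} cᵢ cⱼ)` of the Dyson–Schwinger
equation `X = 1 + λ B₊(X²)` (for a Hochschild 1-cocycle `B₊`, e.g. grafting on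
rooted trees) generates a Hopf subalgebra:
`Δ(cₙ) = Σ_{k=0}^{n} Pₖⁿ ⊗ c_k` with
`Pₖⁿ = Σ_{l₁+⋯+l_{k+1}=n−k} c_{l₁}⋯c_{l_{k+1}}`. -/
theorem dyson_schwinger_hopf_subalgebra
    (K H : Type*) [Field K] [CommRing H] [Bialgebra K H]
    (B : H →ₗ[K] H)
    (hB : ∀ x : H, Coalgebra.comul (R := K) (B x)
        = B x ⊗ₜ[K] (1 : H) + LinearMap.lTensor H B (Coalgebra.comul (R := K) x))
    (c : ℕ → H) (hc0 : c 0 = 1)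
    (hrec : ∀ n : ℕ, 1 ≤ n →
      c n = B (∑ p ∈ Finset.HasAntidiagonal.antidiagonal (n - 1), c p.1 * c p.2)) :
    ∀ n : ℕ, Coalgebra.comul (R := K) (c n) =
      ∑ k ∈ Finset.range (n + 1),
        (∑ l ∈ Finset.Nat.antidiagonalTuple (k + 1) (n - k), ∏ i, c (l i)) ⊗ₜ[K] c k := by
  have main : ∀ n : ℕ, Coalgebra.comul (R := K) (c n)
      = ∑ y ∈ Finset.HasAntidiagonal.antidiagonal n, SS c (y.1 + 1) y.2 ⊗ₜ[K] c y.1 := by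
    intro n
    induction n using Nat.strong_induction_on with
    | _ n IH =>
      cases n with
      | zero =>
        simp [hc0, SS_one, Finset.Nat.antidiagonal_zero, Algebra.TensorProduct.one_def]
      | succ m =>
        rw [hrec (m + 1) (by omega)]
        simp only [Nat.add_sub_cancel]
        rw [hB]
        rw [Finset.Nat.sum_antidiagonal_succ
          (f := fun y => SS c (y.1 + 1) y.2 ⊗ₜ[K] c y.1)]
        congr 1
        · -- B X ⊗ 1 = SS c 1 (m+1) ⊗ c 0
          rw [SS_one, hc0, hrec (m + 1) (by omega)]
          simp only [Nat.add_sub_cancel]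
        · -- the cocycle part
          calc
            LinearMap.lTensor H B
                (Coalgebra.comul (R := K) (∑ p ∈ Finset.HasAntidiagonal.antidiagonal m, c p.1 * c p.2))
              = ∑ x ∈ Finset.HasAntidiagonal.antidiagonal m, ∑ y ∈ Finset.HasAntidiagonal.antidiagonal x.1,
                  ∑ z ∈ Finset.HasAntidiagonal.antidiagonal x.2,
                    (SS c (y.1 + 1) y.2 * SS c (z.1 + 1) z.2) ⊗ₜ[K] B (c y.1 * c z.1) := by
                rw [map_sum, map_sum]
                refine Finset.sum_congr rfl fun x hx => ?_
                have hx' := Finset.HasAntidiagonal.mem_antidiagonal.mp hx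
                rw [Bialgebra.comul_mul, IH x.1 (by omega), IH x.2 (by omega),
                  Finset.sum_mul_sum, map_sum]
                refine Finset.sum_congr rfl fun y _ => ?_
                rw [map_sum]
                refine Finset.sum_congr rfl fun z _ => ?_
                rw [Algebra.TensorProduct.tmul_mul_tmul, LinearMap.lTensor_tmul]
            _ = ∑ x ∈ Finset.HasAntidiagonal.antidiagonal m, ∑ y ∈ Finset.HasAntidiagonal.antidiagonal x.1,
                  ∑ z ∈ Finset.HasAntidiagonal.antidiagonal x.2,
                    (SS c (y.1 + 1) z.1 * SS c (y.2 + 1) z.2) ⊗ₜ[K] B (c y.1 * c y.2) :=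
                adA4 m (fun a u b v => (SS c (a + 1) u * SS c (b + 1) v) ⊗ₜ[K] B (c a * c b))
            _ = ∑ x ∈ Finset.HasAntidiagonal.antidiagonal m, SS c (x.1 + 1 + 1) x.2 ⊗ₜ[K] c (x.1 + 1) := by
                refine Finset.sum_congr rfl fun x _ => ?_
                rw [hrec (x.1 + 1) (by omega)]
                simp only [Nat.add_sub_cancel]
                rw [map_sum, tmul_sum]
                refine Finset.sum_congr rfl fun y hy => ?_
                have hy' := Finset.HasAntidiagonal.mem_antidiagonal.mp hy
                rw [← TensorProduct.sum_tmul]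
                congr 1
                rw [SS_conv c (y.1 + 1) (y.2 + 1) x.2,
                  show y.1 + 1 + (y.2 + 1) = x.1 + 1 + 1 by omega]
  intro n
  exact (main n).trans (Finset.Nat.sum_antidiagonal_eq_sum_range_succ_mk
    (fun y => SS c (y.1 + 1) y.2 ⊗ₜ[K] c y.1) n)
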